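/- Let L be the 2-dimensional nonabelian Lie algebra over a field K of characteristic 2 with basis {a,b} and multiplication [a,b] = [b,a] = a, [a,a] = [b,b] = 0. For p+q = n let χ_{pq} ∈ Sym^n(L,K) be the cochain with χ_{pq}(a,…,a,b,…,b) = 1 when a occurs p times and b occurs q times, and value 0 on all other basis tuples. Then δχ_{pq} = p(q+1)·χ_{p,q+1} (coefficients computed mod 2), and for each n the cohomology classes of the cocycles χ_{pq} with p+q = n and p even form a basis of H^n_comm(L,K); in particular dim_K H^n_comm(L,K) = ⌊n/2⌋ + 1. -/

import Mathlib

/-!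
STATEMENT 15: let `L` be the 2-dimensional nonabelian Lie algebra over a field `K` of
characteristic 2, with basis `a = ![1,0]`, `b = ![0,1]` and `[a,b] = [b,a] = a`,
`[a,a] = [b,b] = 0`.  With `χ_{pq} ∈ Sym^{p+q}(L,K)` the symmetric multilinear cochain
taking value 1 on the basis tuple with `p` copies of `a` and `q` copies of `b` (and 0 on
the other basis tuples), one has `δχ_{pq} = p(q+1)·χ_{p,q+1}`, and for each `n` the
classes of the cocycles `χ_{pq}` with `p + q = n`, `p` even, form a basis of
`H^n_comm(L,K)`; in particular `dim H^n_comm(L,K) = ⌊n/2⌋ + 1`.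
-/

def IsSym {L M : Type*} (n : ℕ) (f : (Fin n → L) → M) : Prop :=
  ∀ (σ : Equiv.Perm (Fin n)) (v : Fin n → L), f (v ∘ σ) = f v

def IsMultilin (K : Type*) {L M : Type*} [CommSemiring K] [AddCommMonoid L] [Module K L]
    [AddCommMonoid M] [Module K M] (n : ℕ) (f : (Fin n → L) → M) : Prop :=
  (∀ (v : Fin n → L) (i : Fin n) (a b : L),
    f (Function.update v i (a + b)) = f (Function.update v i a) + f (Function.update v i b)) ∧
  (∀ (v : Fin n → L) (i : Fin n) (c : K) (a : L),
    f (Function.update v i (c • a)) = c • f (Function.update v i a))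

def cdiff {K L M : Type*} [CommSemiring K] [AddCommMonoid L] [Module K L]
    [AddCommMonoid M] [Module K M]
    (br : L →ₗ[K] L →ₗ[K] L) (ρ : L →ₗ[K] M →ₗ[K] M) (n : ℕ)
    (φ : (Fin n → L) → M) : (Fin (n + 1) → L) → M := fun x =>
  (∑ p ∈ Finset.univ.filter (fun p : Fin (n + 1) × Fin (n + 1) => p.1 < p.2),
      φ (Function.update x p.1 (br (x p.1) (x p.2)) ∘ p.2.succAbove)) +
  ∑ i : Fin (n + 1), ρ (x i) (φ (x ∘ i.succAbove))

theorem cdiff_add {K L M : Type*} [Field K] [AddCommGroup L] [Module K L]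
    [AddCommGroup M] [Module K M]
    (br : L →ₗ[K] L →ₗ[K] L) (ρ : L →ₗ[K] M →ₗ[K] M) (n : ℕ)
    (f g : (Fin n → L) → M) :
    cdiff br ρ n (f + g) = cdiff br ρ n f + cdiff br ρ n g := by
  funext x
  simp only [cdiff, Pi.add_apply, map_add, Finset.sum_add_distrib]
  abel

theorem cdiff_smul {K L M : Type*} [Field K] [AddCommGroup L] [Module K L]
    [AddCommGroup M] [Module K M]
    (br : L →ₗ[K] L →ₗ[K] L) (ρ : L →ₗ[K] M →ₗ[K] M) (n : ℕ)
    (c : K) (f : (Fin n → L) → M) :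
    cdiff br ρ n (c • f) = c • cdiff br ρ n f := by
  funext x
  simp only [cdiff, Pi.smul_apply, map_smul, Finset.smul_sum, smul_add]

def Sc (K : Type*) (L M : Type*) [Field K] [AddCommGroup L] [Module K L]
    [AddCommGroup M] [Module K M] (n : ℕ) : Submodule K ((Fin n → L) → M) where
  carrier := {f | IsMultilin K n f ∧ IsSym n f}
  add_mem' := by
    rintro f g ⟨⟨hfa, hfs⟩, hfsym⟩ ⟨⟨hga, hgs⟩, hgsym⟩
    refine ⟨⟨fun v i a b => ?_, fun v i c a => ?_⟩, fun σ v => ?_⟩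
    · simp only [Pi.add_apply, hfa, hga]; abel
    · simp only [Pi.add_apply, hfs, hgs, smul_add]
    · simp only [Pi.add_apply, hfsym σ v, hgsym σ v]
  zero_mem' := by
    refine ⟨⟨fun v i a b => ?_, fun v i c a => ?_⟩, fun σ v => ?_⟩
    · show (0 : M) = 0 + 0; rw [add_zero]
    · show (0 : M) = c • 0; rw [smul_zero]
    · rfl
  smul_mem' := by
    rintro c f ⟨⟨hfa, hfs⟩, hfsym⟩
    refine ⟨⟨fun v i a b => ?_, fun v i c' a => ?_⟩, fun σ v => ?_⟩
    · show c • f (Function.update v i (a + b))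
        = c • f (Function.update v i a) + c • f (Function.update v i b)
      rw [hfa, smul_add]
    · show c • f (Function.update v i (c' • a)) = c' • (c • f (Function.update v i a))
      rw [hfs, smul_comm]
    · show c • f (v ∘ σ) = c • f v
      rw [hfsym σ v]

def Zc (K : Type*) (L M : Type*) [Field K] [AddCommGroup L] [Module K L]
    [AddCommGroup M] [Module K M]
    (br : L →ₗ[K] L →ₗ[K] L) (ρ : L →ₗ[K] M →ₗ[K] M) (n : ℕ) :
    Submodule K ((Fin n → L) → M) where
  carrier := {f | IsMultilin K n f ∧ IsSym n f ∧ cdiff br ρ n f = 0}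
  add_mem' := by
    rintro f g ⟨hf1, hf2, hf3⟩ ⟨hg1, hg2, hg3⟩
    have h := (Sc K L M n).add_mem (by exact ⟨hf1, hf2⟩) (by exact ⟨hg1, hg2⟩)
    exact ⟨h.1, h.2, by rw [cdiff_add, hf3, hg3, add_zero]⟩
  zero_mem' := by
    have h := (Sc K L M n).zero_mem
    exact ⟨h.1, h.2, by rw [show (0 : (Fin n → L) → M) = (0:K) • 0 by simp, cdiff_smul]; simp⟩
  smul_mem' := by
    rintro c f ⟨hf1, hf2, hf3⟩
    have h := (Sc K L M n).smul_mem c (by exact ⟨hf1, hf2⟩)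
    exact ⟨h.1, h.2, by rw [cdiff_smul, hf3, smul_zero]⟩

/-- The space `B^n_comm(L,M)` of symmetric `n`-coboundaries. -/
def Bc (K : Type*) (L M : Type*) [Field K] [AddCommGroup L] [Module K L]
    [AddCommGroup M] [Module K M]
    (br : L →ₗ[K] L →ₗ[K] L) (ρ : L →ₗ[K] M →ₗ[K] M) :
    (n : ℕ) → Submodule K ((Fin n → L) → M)
  | 0 => ⊥
  | n + 1 => Submodule.span K
      {g | ∃ f : (Fin n → L) → M, IsMultilin K n f ∧ IsSym n f ∧ g = cdiff br ρ n f}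

/-- The commutative cohomology `H^n_comm(L,M) = Z^n_comm(L,M) / B^n_comm(L,M)`. -/
abbrev Hcomm (K : Type*) (L M : Type*) [Field K] [AddCommGroup L] [Module K L]
    [AddCommGroup M] [Module K M]
    (br : L →ₗ[K] L →ₗ[K] L) (ρ : L →ₗ[K] M →ₗ[K] M) (n : ℕ) :=
  Zc K L M br ρ n ⧸ ((Bc K L M br ρ n).comap (Zc K L M br ρ n).subtype)

/-- The basis cochain `χ_{pq}` of `Sym^n(Fin 2 → K, K)` (nonzero only for `p + q = n`):
the symmetric multilinear map taking value 1 on the tuple with `p` copies of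
`a = e₀` and `q` copies of `b = e₁`, and 0 on the other basis tuples. -/
def chi2 (K : Type*) [Field K] (p q n : ℕ) : (Fin n → (Fin 2 → K)) → K := fun x =>
  ∑ S : Finset (Fin n),
    if S.card = p ∧ Sᶜ.card = q then (∏ i ∈ S, x i 0) * (∏ j ∈ Sᶜ, x j 1) else 0


namespace TDC
open Finset
variable {K : Type*} [Field K]

/-- the sorted basis tuple with `p` copies of `a` then `n-p` copies of `b`. -/
def T (K : Type*) [Field K] (n p : ℕ) : Fin n → Fin 2 → K :=
  fun i => if (i : ℕ) < p then ![1,0] else ![0,1]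

def mono {n : ℕ} (S : Finset (Fin n)) (x : Fin n → Fin 2 → K) : K :=
  (∏ i ∈ S, x i 0) * ∏ j ∈ Sᶜ, x j 1

lemma card_low (n p : ℕ) (h : p ≤ n) :
    (univ.filter (fun i : Fin n => (i : ℕ) < p)).card = p := by
  rw [← Finset.card_range p]
  apply Finset.card_bij (fun (i : Fin n) _ => (i : ℕ))
  · intro a ha; simp only [mem_filter] at ha; simpa using ha.2
  · intro a _ b _ hab; exact Fin.ext hab
  · intro b hb
    simp only [mem_range] at hb
    exact ⟨⟨b, lt_of_lt_of_le hb h⟩, by simp [hb], rfl⟩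

lemma card_high (n p : ℕ) (h : p ≤ n) :
    (univ.filter (fun i : Fin n => p ≤ (i : ℕ))).card = n - p := by
  have : (univ.filter (fun i : Fin n => p ≤ (i : ℕ)))
      = (univ.filter (fun i : Fin n => (i : ℕ) < p))ᶜ := by
    ext i; simp [not_lt]
  rw [this, Finset.card_compl, card_low n p h, Fintype.card_fin]

lemma chi2_apply (p q n : ℕ) (x : Fin n → Fin 2 → K) :
    chi2 K p q n x
      = ∑ S ∈ univ.filter (fun S : Finset (Fin n) => S.card = p ∧ Sᶜ.card = q), mono S x := by
  rw [chi2, Finset.sum_filter]; rfl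

lemma chi2_apply_of (p q n : ℕ) (h : p + q = n) (x : Fin n → Fin 2 → K) :
    chi2 K p q n x = ∑ S ∈ univ.filter (fun S : Finset (Fin n) => S.card = p), mono S x := by
  rw [chi2_apply]
  apply Finset.sum_congr _ (fun _ _ => rfl)
  apply Finset.filter_congr
  intro S _
  simp only [Finset.card_compl, Fintype.card_fin]
  constructor
  · rintro ⟨h1, _⟩; exact h1
  · rintro rfl
    refine ⟨rfl, by omega⟩

lemma chi2_eq_zero (p q n : ℕ) (h : p + q ≠ n) : chi2 K p q n = 0 := by
  funext x
  rw [chi2_apply]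
  apply Finset.sum_eq_zero
  intro S hS
  simp only [mem_filter, Finset.card_compl, Fintype.card_fin] at hS
  obtain ⟨_, h1, h2⟩ := hS
  have := S.card_le_univ
  simp only [Finset.card_univ, Fintype.card_fin] at this
  omega


lemma mono_update {n : ℕ} (S : Finset (Fin n)) (v : Fin n → Fin 2 → K) (i : Fin n)
    (w : Fin 2 → K) :
    mono S (Function.update v i w)
      = if i ∈ S then w 0 * ((∏ k ∈ S \ {i}, v k 0) * ∏ j ∈ Sᶜ, v j 1)
        else (∏ k ∈ S, v k 0) * (w 1 * ∏ j ∈ Sᶜ \ {i}, v j 1) := by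
  unfold mono
  by_cases h : i ∈ S
  · have h' : i ∉ Sᶜ := by simpa using h
    rw [if_pos h]
    rw [show (∏ k ∈ S, (Function.update v i w) k 0)
        = ∏ k ∈ S, (Function.update (fun t => v t 0) i (w 0)) k by
      apply Finset.prod_congr rfl; intro k _
      by_cases hk : k = i
      · subst hk; simp
      · simp [Function.update_of_ne hk]]
    rw [Finset.prod_update_of_mem h]
    rw [show (∏ k ∈ Sᶜ, (Function.update v i w) k 1) = ∏ k ∈ Sᶜ, v k 1 by
      apply Finset.prod_congr rfl; intro k hk
      have : k ≠ i := by rintro rfl; exact h' hk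
      simp [Function.update_of_ne this]]
    ring
  · have h' : i ∈ Sᶜ := by simpa using h
    rw [if_neg h]
    rw [show (∏ k ∈ S, (Function.update v i w) k 0) = ∏ k ∈ S, v k 0 by
      apply Finset.prod_congr rfl; intro k hk
      have : k ≠ i := by rintro rfl; exact h hk
      simp [Function.update_of_ne this]]
    rw [show (∏ k ∈ Sᶜ, (Function.update v i w) k 1)
        = ∏ k ∈ Sᶜ, (Function.update (fun t => v t 1) i (w 1)) k by
      apply Finset.prod_congr rfl; intro k _
      by_cases hk : k = i
      · subst hk; simp
      · simp [Function.update_of_ne hk]]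
    rw [Finset.prod_update_of_mem h']

lemma mono_add {n : ℕ} (S : Finset (Fin n)) (v : Fin n → Fin 2 → K) (i : Fin n)
    (a b : Fin 2 → K) :
    mono S (Function.update v i (a + b))
      = mono S (Function.update v i a) + mono S (Function.update v i b) := by
  simp only [mono_update, Pi.add_apply]
  split <;> ring

lemma mono_smul {n : ℕ} (S : Finset (Fin n)) (v : Fin n → Fin 2 → K) (i : Fin n)
    (c : K) (a : Fin 2 → K) :
    mono S (Function.update v i (c • a)) = c • mono S (Function.update v i a) := by
  simp only [mono_update, Pi.smul_apply, smul_eq_mul]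
  split <;> ring

lemma mono_comp_perm {n : ℕ} (S : Finset (Fin n)) (v : Fin n → Fin 2 → K)
    (σ : Equiv.Perm (Fin n)) :
    mono S (v ∘ σ) = mono (S.map σ.toEmbedding) v := by
  unfold mono
  have hc : (S.map σ.toEmbedding)ᶜ = Sᶜ.map σ.toEmbedding := by
    ext t
    simp only [Finset.mem_compl, Finset.mem_map, Equiv.coe_toEmbedding]
    constructor
    · intro h
      exact ⟨σ.symm t, by
        intro hmem
        exact h ⟨σ.symm t, hmem, by simp⟩, by simp⟩
    · rintro ⟨s, hs, rfl⟩ ⟨s', hs', he⟩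
      have : s' = s := σ.injective he
      subst this; exact hs hs'
  rw [hc, Finset.prod_map, Finset.prod_map]
  rfl


lemma chi2_multilin (p q n : ℕ) :
    (∀ (v : Fin n → Fin 2 → K) (i : Fin n) (a b : Fin 2 → K),
      chi2 K p q n (Function.update v i (a + b))
        = chi2 K p q n (Function.update v i a) + chi2 K p q n (Function.update v i b)) ∧
    (∀ (v : Fin n → Fin 2 → K) (i : Fin n) (c : K) (a : Fin 2 → K),
      chi2 K p q n (Function.update v i (c • a)) = c • chi2 K p q n (Function.update v i a)) := by
  constructor
  · intro v i a b
    simp only [chi2_apply, mono_add, Finset.sum_add_distrib]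
  · intro v i c a
    simp only [chi2_apply, mono_smul, Finset.smul_sum]

lemma chi2_sym (p q n : ℕ) (σ : Equiv.Perm (Fin n)) (v : Fin n → Fin 2 → K) :
    chi2 K p q n (v ∘ σ) = chi2 K p q n v := by
  simp only [chi2_apply]
  refine Finset.sum_nbij' (fun S => S.map σ.toEmbedding)
    (fun S => S.map σ.symm.toEmbedding) ?_ ?_ ?_ ?_ ?_
  · intro S hS
    simp only [mem_filter, mem_univ, true_and] at hS ⊢
    rcases hS with ⟨h1, h2⟩
    constructor
    · rw [Finset.card_map]; exact h1
    · rw [show (S.map σ.toEmbedding)ᶜ = Sᶜ.map σ.toEmbedding from ?_, Finset.card_map]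
      · exact h2
      · ext t
        simp only [Finset.mem_compl, Finset.mem_map, Equiv.coe_toEmbedding]
        constructor
        · intro h
          exact ⟨σ.symm t, fun hmem => h ⟨σ.symm t, hmem, by simp⟩, by simp⟩
        · rintro ⟨s, hs, rfl⟩ ⟨s', hs', he⟩
          have : s' = s := σ.injective he
          subst this; exact hs hs'
  · intro S hS
    simp only [mem_filter, mem_univ, true_and] at hS ⊢
    rcases hS with ⟨h1, h2⟩
    constructor
    · rw [Finset.card_map]; exact h1
    · rw [show (S.map σ.symm.toEmbedding)ᶜ = Sᶜ.map σ.symm.toEmbedding from ?_, Finset.card_map]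
      · exact h2
      · ext t
        simp only [Finset.mem_compl, Finset.mem_map, Equiv.coe_toEmbedding]
        constructor
        · intro h
          exact ⟨σ t, fun hmem => h ⟨σ t, hmem, by simp⟩, by simp⟩
        · rintro ⟨s, hs, rfl⟩ ⟨s', hs', he⟩
          have : s' = s := σ.symm.injective he
          subst this; exact hs hs'
  · intro S _
    ext t; simp
  · intro S _
    ext t; simp
  · intro S _
    exact mono_comp_perm S v σ

lemma T_apply_zero (n p : ℕ) (i : Fin n) : T K n p i 0 = if (i : ℕ) < p then 1 else 0 := by
  unfold T; split <;> simp
lemma T_apply_one (n p : ℕ) (i : Fin n) : T K n p i 1 = if (i : ℕ) < p then 0 else 1 := by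
  unfold T; split <;> simp

lemma mono_T (n p' : ℕ) (S : Finset (Fin n)) :
    mono S (T K n p') = if S = univ.filter (fun i : Fin n => (i : ℕ) < p') then 1 else 0 := by
  unfold mono
  by_cases h1 : ∀ i ∈ S, (i : ℕ) < p'
  · by_cases h2 : ∀ j ∈ Sᶜ, ¬ ((j : ℕ) < p')
    · have hS : S = univ.filter (fun i : Fin n => (i : ℕ) < p') := by
        ext i
        simp only [mem_filter, mem_univ, true_and]
        constructor
        · exact h1 i
        · intro hi
          by_contra hmem
          exact h2 i (by simpa using hmem) hi
      rw [if_pos hS]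
      rw [Finset.prod_eq_one (fun i hi => by rw [T_apply_zero, if_pos (h1 i hi)]),
        Finset.prod_eq_one (fun j hj => by rw [T_apply_one, if_neg (h2 j hj)]), one_mul]
    · push_neg at h2
      obtain ⟨j, hj, hjlt⟩ := h2
      have : (∏ j ∈ Sᶜ, T K n p' j 1) = 0 :=
        Finset.prod_eq_zero hj (by rw [T_apply_one, if_pos hjlt])
      rw [this, mul_zero, if_neg]
      intro hS
      apply (by simpa using hj : j ∉ S)
      rw [hS]; simp [hjlt]
  · push_neg at h1
    obtain ⟨i, hi, hilt⟩ := h1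
    have : (∏ i ∈ S, T K n p' i 0) = 0 :=
      Finset.prod_eq_zero hi (by rw [T_apply_zero, if_neg (not_lt.mpr hilt)])
    rw [this, zero_mul, if_neg]
    rintro rfl
    simp only [mem_filter, mem_univ, true_and] at hi
    exact absurd hi (not_lt.mpr hilt)

lemma chi2_T (p q n p' : ℕ) (hn : p + q = n) (hp' : p' ≤ n) :
    chi2 K p q n (T K n p') = if p = p' then 1 else 0 := by
  rw [chi2_apply_of p q n hn]
  rw [show (∑ S ∈ univ.filter (fun S : Finset (Fin n) => S.card = p), mono S (T K n p'))
      = ∑ S ∈ univ.filter (fun S : Finset (Fin n) => S.card = p),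
          (if S = univ.filter (fun i : Fin n => (i : ℕ) < p') then (1:K) else 0) from
    Finset.sum_congr rfl (fun S _ => mono_T n p' S)]
  rw [Finset.sum_ite_eq' (univ.filter (fun S : Finset (Fin n) => S.card = p))
    (univ.filter (fun i : Fin n => (i : ℕ) < p')) (fun _ => (1:K))]
  simp only [mem_filter, mem_univ, true_and, card_low n p' hp']
  by_cases h : p = p'
  · rw [if_pos h.symm, if_pos h]
  · rw [if_neg (Ne.symm h), if_neg h]

lemma monotone_fin2 {n : ℕ} (g : Fin n → Fin 2) (hg : Monotone g) (i : Fin n) :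
    g i = 0 ↔ (i : ℕ) < (univ.filter (fun j : Fin n => g j = 0)).card := by
  set Z := univ.filter (fun j : Fin n => g j = 0) with hZ
  constructor
  · intro hi
    have hsub : univ.filter (fun j : Fin n => (j : ℕ) < (i : ℕ) + 1) ⊆ Z := by
      intro j hj
      simp only [mem_filter, mem_univ, true_and] at hj
      simp only [hZ, mem_filter, mem_univ, true_and]
      have hji : j ≤ i := by
        rw [Fin.le_def]; omega
      have := hg hji
      rw [hi] at this
      exact le_antisymm this (Fin.zero_le _)
    have := Finset.card_le_card hsub
    rw [card_low n ((i : ℕ) + 1) (by omega)] at this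
    omega
  · intro hi
    by_contra hne
    have hone : g i = 1 := by omega
    have hsub : Z ⊆ univ.filter (fun j : Fin n => (j : ℕ) < (i : ℕ)) := by
      intro j hj
      simp only [hZ, mem_filter, mem_univ, true_and] at hj
      simp only [mem_filter, mem_univ, true_and]
      by_contra hge
      have hij : i ≤ j := by rw [Fin.le_def]; omega
      have := hg hij
      rw [hone, hj] at this
      exact absurd this (by decide)
    have := Finset.card_le_card hsub
    rw [card_low n (i : ℕ) (by omega)] at this
    omega

lemma exists_sorted {n : ℕ} (m : Fin n → Fin 2) :
    ∃ (σ : Equiv.Perm (Fin n)) (p : ℕ), p ≤ n ∧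
      ∀ i : Fin n, m (σ i) = if (i : ℕ) < p then 0 else 1 := by
  refine ⟨Tuple.sort m, (univ.filter (fun j : Fin n => (m ∘ Tuple.sort m) j = 0)).card, ?_, ?_⟩
  · calc _ ≤ (univ : Finset (Fin n)).card := Finset.card_le_card (Finset.filter_subset _ _)
      _ = n := by simp
  · intro i
    have h := monotone_fin2 (m ∘ Tuple.sort m) (Tuple.monotone_sort m) i
    by_cases hi : (i : ℕ) < (univ.filter (fun j : Fin n => (m ∘ Tuple.sort m) j = 0)).card
    · rw [if_pos hi]
      exact h.mpr hi
    · rw [if_neg hi]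
      have : m (Tuple.sort m i) ≠ 0 := fun hc => hi (h.mp hc)
      omega

lemma basisFun_fin2_zero : (Pi.basisFun K (Fin 2)) 0 = ![1, 0] := by
  funext j
  rw [Pi.basisFun_apply]
  fin_cases j <;> simp

lemma basisFun_fin2_one : (Pi.basisFun K (Fin 2)) 1 = ![0, 1] := by
  funext j
  rw [Pi.basisFun_apply]
  fin_cases j <;> simp

lemma update_irrel {α : Sort*} {β : α → Sort*} (inst inst' : DecidableEq α) (f : ∀ a, β a)
    (a : α) (w : β a) : @Function.update _ _ inst f a w = @Function.update _ _ inst' f a w := by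
  cases Subsingleton.elim inst inst'
  rfl

lemma vanish {n : ℕ} (f : (Fin n → Fin 2 → K) → K)
    (hadd : ∀ (v : Fin n → Fin 2 → K) (i : Fin n) (a b : Fin 2 → K),
      f (Function.update v i (a + b)) = f (Function.update v i a) + f (Function.update v i b))
    (hsmul : ∀ (v : Fin n → Fin 2 → K) (i : Fin n) (c : K) (a : Fin 2 → K),
      f (Function.update v i (c • a)) = c • f (Function.update v i a))
    (hsym : ∀ (σ : Equiv.Perm (Fin n)) (v : Fin n → Fin 2 → K), f (v ∘ σ) = f v)
    (hT : ∀ p ≤ n, f (T K n p) = 0) :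
    f = 0 := by
  let F : MultilinearMap K (fun _ : Fin n => Fin 2 → K) K :=
    { toFun := f
      map_update_add' := by
        intro inst m i x y
        rw [update_irrel inst _ m i (x + y), update_irrel inst _ m i x,
          update_irrel inst _ m i y]
        exact hadd m i x y
      map_update_smul' := by
        intro inst m i c x
        rw [update_irrel inst _ m i (c • x), update_irrel inst _ m i x]
        exact hsmul m i c x }
  have hF : F = 0 := by
    apply Module.Basis.ext_multilinear (fun _ => Pi.basisFun K (Fin 2))
    intro v
    show f _ = _
    obtain ⟨σ, p, hp, hsort⟩ := exists_sorted v
    have : f (fun i => (Pi.basisFun K (Fin 2)) (v i)) =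
        f ((fun i => (Pi.basisFun K (Fin 2)) (v i)) ∘ σ) := (hsym σ _).symm
    rw [this]
    have he : ((fun i => (Pi.basisFun K (Fin 2)) (v i)) ∘ σ) = T K n p := by
      funext i
      show (Pi.basisFun K (Fin 2)) (v (σ i)) = _
      rw [hsort i]
      unfold T
      by_cases hi : (i : ℕ) < p
      · rw [if_pos hi, if_pos hi, basisFun_fin2_zero]
      · rw [if_neg hi, if_neg hi, basisFun_fin2_one]
    rw [he, hT p hp]
    rfl
  funext x
  exact congrFun (congrArg (fun (G : MultilinearMap K (fun _ : Fin n => Fin 2 → K) K) => G.toFun) hF) x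

lemma apply_zero {n : ℕ} (f : (Fin n → Fin 2 → K) → K)
    (hsmul : ∀ (v : Fin n → Fin 2 → K) (i : Fin n) (c : K) (a : Fin 2 → K),
      f (Function.update v i (c • a)) = c • f (Function.update v i a))
    (v : Fin n → Fin 2 → K) (s : Fin n) (h : v s = 0) : f v = 0 := by
  have h1 : v = Function.update v s ((0 : K) • (0 : Fin 2 → K)) := by
    rw [smul_zero]
    funext t
    by_cases ht : t = s
    · subst ht; rw [Function.update_self]; exact h
    · rw [Function.update_of_ne ht]
  rw [h1, hsmul, zero_smul]

lemma T_comp_succAbove (n p' : ℕ) (j : Fin (n + 1)) (hj : p' ≤ (j : ℕ)) :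
    (T K (n + 1) p') ∘ j.succAbove = T K n p' := by
  funext s
  show T K (n+1) p' (j.succAbove s) = T K n p' s
  unfold T
  rcases lt_or_ge (Fin.castSucc s) j with h | h
  · rw [Fin.succAbove_of_castSucc_lt _ _ h, Fin.coe_castSucc]
  · rw [Fin.succAbove_of_le_castSucc _ _ h, Fin.val_succ]
    have hs : p' ≤ (s : ℕ) := by
      have := h
      rw [Fin.le_def, Fin.coe_castSucc] at this
      omega
    rw [if_neg (by omega), if_neg (by omega)]

lemma zero_coord_of_update {n : ℕ} (x : Fin (n + 1) → Fin 2 → K) (i j : Fin (n + 1))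
    (hij : i ≠ j) :
    ∃ s : Fin n, ((Function.update x i (0 : Fin 2 → K)) ∘ j.succAbove) s = 0 := by
  obtain ⟨s, hs⟩ := Fin.exists_succAbove_eq hij
  exact ⟨s, by show (Function.update x i 0) (j.succAbove s) = 0; rw [hs, Function.update_self]⟩

lemma cdiff_T (br : (Fin 2 → K) →ₗ[K] (Fin 2 → K) →ₗ[K] (Fin 2 → K))
    (hab : br ![1, 0] ![0, 1] = ![1, 0])
    (haa : br ![1, 0] ![1, 0] = 0) (hbb : br ![0, 1] ![0, 1] = 0)
    {n : ℕ} (f : (Fin n → Fin 2 → K) → K)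
    (hsmul : ∀ (v : Fin n → Fin 2 → K) (i : Fin n) (c : K) (a : Fin 2 → K),
      f (Function.update v i (c • a)) = c • f (Function.update v i a))
    (p' : ℕ) (hp' : p' ≤ n) :
    cdiff br (0 : (Fin 2 → K) →ₗ[K] K →ₗ[K] K) n f (T K (n + 1) p')
      = (p' * (n + 1 - p')) • f (T K n p') := by
  unfold cdiff
  rw [show (∑ i : Fin (n+1), (0 : (Fin 2 → K) →ₗ[K] K →ₗ[K] K) (T K (n+1) p' i)
      (f ((T K (n+1) p') ∘ i.succAbove))) = 0 from
    Finset.sum_eq_zero (fun i _ => by simp), add_zero]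
  set x := T K (n + 1) p' with hx
  have hxa : ∀ i : Fin (n + 1), (i : ℕ) < p' → x i = ![1, 0] := by
    intro i hi; rw [hx]; unfold T; rw [if_pos hi]
  have hxb : ∀ i : Fin (n + 1), p' ≤ (i : ℕ) → x i = ![0, 1] := by
    intro i hi; rw [hx]; unfold T; rw [if_neg (by omega)]
  rw [← Finset.sum_filter_add_sum_filter_not
    (univ.filter (fun pr : Fin (n+1) × Fin (n+1) => pr.1 < pr.2))
    (fun pr => (pr.1 : ℕ) < p' ∧ p' ≤ (pr.2 : ℕ))]
  have hbad : (∑ pr ∈ (univ.filter (fun pr : Fin (n+1) × Fin (n+1) => pr.1 < pr.2)).filter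
      (fun pr => ¬((pr.1 : ℕ) < p' ∧ p' ≤ (pr.2 : ℕ))),
      f (Function.update x pr.1 (br (x pr.1) (x pr.2)) ∘ pr.2.succAbove)) = 0 := by
    apply Finset.sum_eq_zero
    intro pr hpr
    simp only [mem_filter, mem_univ, true_and] at hpr
    obtain ⟨hlt, hng⟩ := hpr
    have hij : pr.1 ≠ pr.2 := ne_of_lt hlt
    have hbr : br (x pr.1) (x pr.2) = 0 := by
      rcases lt_or_ge (pr.2 : ℕ) p' with h2 | h2
      · have h1 : (pr.1 : ℕ) < p' := by
          have := hlt; rw [Fin.lt_def] at this; omega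
        rw [hxa _ h1, hxa _ h2, haa]
      · have h1 : p' ≤ (pr.1 : ℕ) := by
          by_contra hc
          exact hng ⟨by omega, h2⟩
        rw [hxb _ h1, hxb _ h2, hbb]
    rw [hbr]
    obtain ⟨s, hs⟩ := zero_coord_of_update x pr.1 pr.2 hij
    exact apply_zero f hsmul _ s hs
  rw [hbad, add_zero]
  have hgood : ∀ pr ∈ (univ.filter (fun pr : Fin (n+1) × Fin (n+1) => pr.1 < pr.2)).filter
      (fun pr => (pr.1 : ℕ) < p' ∧ p' ≤ (pr.2 : ℕ)),
      f (Function.update x pr.1 (br (x pr.1) (x pr.2)) ∘ pr.2.succAbove) = f (T K n p') := by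
    intro pr hpr
    simp only [mem_filter, mem_univ, true_and] at hpr
    obtain ⟨hlt, h1, h2⟩ := hpr
    have hupd : Function.update x pr.1 (br (x pr.1) (x pr.2)) = x := by
      rw [hxa _ h1, hxb _ h2, hab, ← hxa _ h1, Function.update_eq_self]
    rw [hupd, hx, T_comp_succAbove n p' pr.2 h2]
  rw [Finset.sum_congr rfl hgood, Finset.sum_const]
  congr 1
  rw [Finset.filter_filter]
  have hset : (univ.filter (fun pr : Fin (n+1) × Fin (n+1) =>
      pr.1 < pr.2 ∧ (pr.1 : ℕ) < p' ∧ p' ≤ (pr.2 : ℕ)))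
      = univ.filter (fun pr : Fin (n+1) × Fin (n+1) => (pr.1 : ℕ) < p' ∧ p' ≤ (pr.2 : ℕ)) := by
    apply Finset.filter_congr
    intro pr _
    constructor
    · rintro ⟨_, h⟩; exact h
    · rintro ⟨h1, h2⟩
      exact ⟨by rw [Fin.lt_def]; omega, h1, h2⟩
  rw [hset]
  rw [show (univ : Finset (Fin (n+1) × Fin (n+1))) = univ ×ˢ univ from rfl,
    Finset.filter_product (fun a : Fin (n+1) => (a : ℕ) < p') (fun b : Fin (n+1) => p' ≤ (b : ℕ)),
    Finset.card_product,
    card_low (n+1) p' (by omega), card_high (n+1) p' (by omega)]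

lemma cdiff_T_top (br : (Fin 2 → K) →ₗ[K] (Fin 2 → K) →ₗ[K] (Fin 2 → K))
    (haa : br ![1, 0] ![1, 0] = 0)
    {n : ℕ} (f : (Fin n → Fin 2 → K) → K)
    (hsmul : ∀ (v : Fin n → Fin 2 → K) (i : Fin n) (c : K) (a : Fin 2 → K),
      f (Function.update v i (c • a)) = c • f (Function.update v i a)) :
    cdiff br (0 : (Fin 2 → K) →ₗ[K] K →ₗ[K] K) n f (T K (n + 1) (n + 1)) = 0 := by
  unfold cdiff
  rw [show (∑ i : Fin (n+1), (0 : (Fin 2 → K) →ₗ[K] K →ₗ[K] K) (T K (n+1) (n+1) i)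
      (f ((T K (n+1) (n+1)) ∘ i.succAbove))) = 0 from
    Finset.sum_eq_zero (fun i _ => by simp), add_zero]
  apply Finset.sum_eq_zero
  intro pr hpr
  simp only [mem_filter, mem_univ, true_and] at hpr
  have hbr : br (T K (n+1) (n+1) pr.1) (T K (n+1) (n+1) pr.2) = 0 := by
    have h1 : T K (n+1) (n+1) pr.1 = ![1,0] := by unfold T; rw [if_pos pr.1.isLt]
    have h2 : T K (n+1) (n+1) pr.2 = ![1,0] := by unfold T; rw [if_pos pr.2.isLt]
    rw [h1, h2, haa]
  rw [hbr]
  obtain ⟨s, hs⟩ := zero_coord_of_update (T K (n+1) (n+1)) pr.1 pr.2 (ne_of_lt hpr)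
  exact apply_zero f hsmul _ s hs

lemma vec_decomp (y : Fin 2 → K) : y = y 0 • ![1,0] + y 1 • ![0,1] := by
  funext t
  fin_cases t <;> simp

lemma br_eq (br : (Fin 2 → K) →ₗ[K] (Fin 2 → K) →ₗ[K] (Fin 2 → K))
    (hab : br ![1, 0] ![0, 1] = ![1, 0]) (hba : br ![0, 1] ![1, 0] = ![1, 0])
    (haa : br ![1, 0] ![1, 0] = 0) (hbb : br ![0, 1] ![0, 1] = 0)
    (y z : Fin 2 → K) :
    br y z = (y 0 * z 1 + y 1 * z 0) • ![1,0] := by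
  conv_lhs => rw [vec_decomp y, vec_decomp z]
  simp only [map_add, map_smul, LinearMap.add_apply, LinearMap.smul_apply, hab, hba, haa, hbb,
    smul_zero, add_zero, zero_add, smul_smul]
  rw [← add_smul]
  congr 1
  ring

-- the image of the complement under succAbove
lemma map_compl_succAbove {n : ℕ} (j : Fin (n + 1)) (S' : Finset (Fin n)) :
    (S'.map (j.succAboveEmb))ᶜ.erase j = S'ᶜ.map (j.succAboveEmb) := by
  ext t
  simp only [Finset.mem_erase, Finset.mem_compl, Finset.mem_map, Fin.succAboveEmb_apply]
  constructor
  · rintro ⟨htj, ht⟩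
    obtain ⟨s, hs⟩ := Fin.exists_succAbove_eq htj
    refine ⟨s, ?_, hs⟩
    intro hmem
    exact ht ⟨s, hmem, hs⟩
  · rintro ⟨s, hs, rfl⟩
    refine ⟨Fin.succAbove_ne j s, ?_⟩
    rintro ⟨s', hs', he⟩
    have : s' = s := j.succAbove_right_injective he
    subst this
    exact hs hs'

lemma key {p q n : ℕ} (hn : p + q = n) (x : Fin (n + 1) → Fin 2 → K)
    (i j : Fin (n + 1)) (hij : i ≠ j) :
    chi2 K p q n
        ((Function.update x i ((x i 0 * x j 1 + x i 1 * x j 0) • ![1,0])) ∘ j.succAbove)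
      = ∑ S ∈ univ.filter (fun S : Finset (Fin (n+1)) =>
          S.card = p ∧ ((i ∈ S ∧ j ∉ S) ∨ (j ∈ S ∧ i ∉ S))), mono S x := by
  set c : K := x i 0 * x j 1 + x i 1 * x j 0 with hc
  set w : Fin 2 → K := c • ![1,0] with hw
  have hw0 : w 0 = c := by rw [hw]; simp
  have hw1 : w 1 = 0 := by rw [hw]; simp
  rw [chi2_apply_of p q n hn]
  -- step 2 : reindex to subsets of Fin (n+1) avoiding j
  have step2 : (∑ S' ∈ univ.filter (fun S' : Finset (Fin n) => S'.card = p),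
        mono S' ((Function.update x i w) ∘ j.succAbove))
      = ∑ S ∈ univ.filter (fun S : Finset (Fin (n+1)) => S.card = p ∧ j ∉ S),
        (∏ t ∈ S, (Function.update x i w) t 0) *
          (∏ t ∈ Sᶜ.erase j, (Function.update x i w) t 1) := by
    apply Finset.sum_bij (fun S' _ => S'.map (j.succAboveEmb))
    · intro S' hS'
      simp only [mem_filter, mem_univ, true_and] at hS' ⊢
      refine ⟨by rw [Finset.card_map]; exact hS', ?_⟩
      rw [Finset.mem_map]
      rintro ⟨s, _, hs⟩
      exact Fin.succAbove_ne j s (by simpa using hs)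
    · intro S₁ _ S₂ _ he
      exact Finset.map_injective _ he
    · intro S hS
      simp only [mem_filter, mem_univ, true_and] at hS
      have himg : (univ.filter (fun s => j.succAbove s ∈ S)).map (j.succAboveEmb) = S := by
        ext t
        simp only [Finset.mem_map, mem_filter, mem_univ, true_and, Fin.succAboveEmb_apply]
        constructor
        · rintro ⟨s, hs, rfl⟩; exact hs
        · intro ht
          have htj : t ≠ j := by rintro rfl; exact hS.2 ht
          obtain ⟨s, hs⟩ := Fin.exists_succAbove_eq htj
          exact ⟨s, by rw [hs]; exact ht, hs⟩
      refine ⟨univ.filter (fun s => j.succAbove s ∈ S), ?_, himg⟩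
      simp only [mem_filter, mem_univ, true_and]
      rw [← Finset.card_map j.succAboveEmb, himg]
      exact hS.1
    · intro S' hS'
      unfold mono
      congr 1
      · rw [Finset.prod_map]
        rfl
      · rw [map_compl_succAbove, Finset.prod_map]
        rfl
  rw [step2]
  -- step 3 : split on i ∈ S; terms with i ∉ S vanish
  rw [← Finset.sum_filter_add_sum_filter_not
    (univ.filter (fun S : Finset (Fin (n+1)) => S.card = p ∧ j ∉ S)) (fun S => i ∈ S)]
  have hnotmem : (∑ S ∈ (univ.filter (fun S : Finset (Fin (n+1)) => S.card = p ∧ j ∉ S)).filter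
      (fun S => ¬ i ∈ S),
      (∏ t ∈ S, (Function.update x i w) t 0) *
        (∏ t ∈ Sᶜ.erase j, (Function.update x i w) t 1)) = 0 := by
    apply Finset.sum_eq_zero
    intro S hS
    simp only [mem_filter, mem_univ, true_and] at hS
    have hiC : i ∈ Sᶜ.erase j := by
      rw [Finset.mem_erase, Finset.mem_compl]
      exact ⟨hij, hS.2⟩
    have : (∏ t ∈ Sᶜ.erase j, (Function.update x i w) t 1) = 0 :=
      Finset.prod_eq_zero hiC (by rw [Function.update_self, hw1])
    rw [this, mul_zero]
  rw [hnotmem, add_zero]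
  -- step 4 : compute the terms with i ∈ S
  have hstep4 : ∀ S ∈ (univ.filter (fun S : Finset (Fin (n+1)) => S.card = p ∧ j ∉ S)).filter
      (fun S => i ∈ S),
      (∏ t ∈ S, (Function.update x i w) t 0) *
        (∏ t ∈ Sᶜ.erase j, (Function.update x i w) t 1)
      = mono S x + mono (insert j (S.erase i)) x := by
    intro S hS
    simp only [mem_filter, mem_univ, true_and] at hS
    obtain ⟨⟨hcard, hjS⟩, hiS⟩ := hS
    have h1 : (∏ t ∈ S, (Function.update x i w) t 0) = c * ∏ t ∈ S.erase i, x t 0 := by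
      rw [show (∏ t ∈ S, (Function.update x i w) t 0)
          = ∏ t ∈ S, (Function.update (fun t => x t 0) i (w 0)) t from
        Finset.prod_congr rfl (fun t _ => by
          by_cases ht : t = i
          · subst ht; simp
          · simp [Function.update_of_ne ht])]
      rw [Finset.prod_update_of_mem hiS, hw0, Finset.sdiff_singleton_eq_erase]
    have h2 : (∏ t ∈ Sᶜ.erase j, (Function.update x i w) t 1) = ∏ t ∈ Sᶜ.erase j, x t 1 := by
      apply Finset.prod_congr rfl
      intro t ht
      have : t ≠ i := by
        rintro rfl
        rw [Finset.mem_erase, Finset.mem_compl] at ht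
        exact ht.2 hiS
      rw [Function.update_of_ne this]
    rw [h1, h2, hc]
    have hmono1 : mono S x = x i 0 * x j 1 * ((∏ t ∈ S.erase i, x t 0) * ∏ t ∈ Sᶜ.erase j, x t 1) := by
      unfold mono
      rw [← Finset.mul_prod_erase S _ hiS, ← Finset.mul_prod_erase Sᶜ _ (by rwa [Finset.mem_compl])]
      ring
    have hcompl : (insert j (S.erase i))ᶜ = insert i (Sᶜ.erase j) := by
      ext t
      simp only [Finset.mem_compl, Finset.mem_insert, Finset.mem_erase]
      push_neg
      constructor
      · rintro ⟨htj, ht⟩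
        by_cases hti : t = i
        · exact Or.inl hti
        · exact Or.inr ⟨htj, ht hti⟩
      · rintro (rfl | ⟨htj, htS⟩)
        · exact ⟨hij, fun h => absurd rfl h⟩
        · exact ⟨htj, fun _ => htS⟩
    have hmono2 : mono (insert j (S.erase i)) x
        = x i 1 * x j 0 * ((∏ t ∈ S.erase i, x t 0) * ∏ t ∈ Sᶜ.erase j, x t 1) := by
      unfold mono
      rw [hcompl]
      rw [Finset.prod_insert (by
        rw [Finset.mem_erase]; rintro ⟨_, h⟩; exact hjS h)]
      rw [Finset.prod_insert (by
        rw [Finset.mem_erase, Finset.mem_compl]; rintro ⟨_, h⟩; exact h hiS)]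
      ring
    rw [hmono1, hmono2]
    ring
  rw [Finset.sum_congr rfl hstep4, Finset.sum_add_distrib]
  -- step 5 : reindex the second sum
  have hfil1 : (univ.filter (fun S : Finset (Fin (n+1)) => S.card = p ∧ j ∉ S)).filter
      (fun S => i ∈ S)
      = univ.filter (fun S : Finset (Fin (n+1)) => S.card = p ∧ i ∈ S ∧ j ∉ S) := by
    rw [Finset.filter_filter]
    apply Finset.filter_congr
    intro S _
    tauto
  have hstep5 : (∑ S ∈ univ.filter (fun S : Finset (Fin (n+1)) => S.card = p ∧ i ∈ S ∧ j ∉ S),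
        mono (insert j (S.erase i)) x)
      = ∑ S ∈ univ.filter (fun S : Finset (Fin (n+1)) => S.card = p ∧ j ∈ S ∧ i ∉ S),
        mono S x := by
    apply Finset.sum_nbij' (fun S => insert j (S.erase i)) (fun S => insert i (S.erase j))
    · intro S hS
      simp only [mem_filter, mem_univ, true_and] at hS ⊢
      obtain ⟨hcard, hiS, hjS⟩ := hS
      refine ⟨?_, Finset.mem_insert_self _ _, ?_⟩
      · rw [Finset.card_insert_of_notMem (by
          rw [Finset.mem_erase]; rintro ⟨_, h⟩; exact hjS h),
          Finset.card_erase_of_mem hiS, hcard]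
        have : 1 ≤ p := by
          by_contra h
          interval_cases p
          · rw [Finset.card_eq_zero] at hcard; subst hcard; simp at hiS
        omega
      · rw [Finset.mem_insert, Finset.mem_erase]
        push_neg
        exact ⟨hij, fun h _ => h rfl⟩
    · intro S hS
      simp only [mem_filter, mem_univ, true_and] at hS ⊢
      obtain ⟨hcard, hjS, hiS⟩ := hS
      refine ⟨?_, Finset.mem_insert_self _ _, ?_⟩
      · rw [Finset.card_insert_of_notMem (by
          rw [Finset.mem_erase]; rintro ⟨_, h⟩; exact hiS h),
          Finset.card_erase_of_mem hjS, hcard]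
        have : 1 ≤ p := by
          by_contra h
          interval_cases p
          · rw [Finset.card_eq_zero] at hcard; subst hcard; simp at hjS
        omega
      · rw [Finset.mem_insert, Finset.mem_erase]
        push_neg
        exact ⟨Ne.symm hij, fun h _ => h rfl⟩
    · intro S hS
      simp only [mem_filter, mem_univ, true_and] at hS
      obtain ⟨hcard, hiS, hjS⟩ := hS
      rw [Finset.erase_insert (by
        rw [Finset.mem_erase]; rintro ⟨_, h⟩; exact hjS h)]
      exact Finset.insert_erase hiS
    · intro S hS
      simp only [mem_filter, mem_univ, true_and] at hS
      obtain ⟨hcard, hjS, hiS⟩ := hS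
      rw [Finset.erase_insert (by
        rw [Finset.mem_erase]; rintro ⟨_, h⟩; exact hiS h)]
      exact Finset.insert_erase hjS
    · intro S _
      rfl
  rw [hfil1, hstep5]
  rw [← Finset.sum_filter_add_sum_filter_not
    (univ.filter (fun S : Finset (Fin (n+1)) =>
      S.card = p ∧ ((i ∈ S ∧ j ∉ S) ∨ (j ∈ S ∧ i ∉ S)))) (fun S => i ∈ S) (fun S => mono S x)]
  congr 1
  · apply Finset.sum_congr _ (fun _ _ => rfl)
    rw [Finset.filter_filter]
    apply Finset.filter_congr
    intro S _
    constructor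
    · rintro ⟨hc, h1, h2⟩
      exact ⟨⟨hc, Or.inl ⟨h1, h2⟩⟩, h1⟩
    · rintro ⟨⟨hc, h⟩, hi⟩
      refine ⟨hc, hi, ?_⟩
      rcases h with ⟨h1, h2⟩ | ⟨h1, h2⟩
      · exact h2
      · exact absurd hi h2
  · apply Finset.sum_congr _ (fun _ _ => rfl)
    rw [Finset.filter_filter]
    apply Finset.filter_congr
    intro S _
    constructor
    · rintro ⟨hc, hj, hi⟩
      exact ⟨⟨hc, Or.inr ⟨hj, hi⟩⟩, hi⟩
    · rintro ⟨⟨hc, h⟩, hi⟩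
      rcases h with ⟨h1, h2⟩ | ⟨h1, h2⟩
      · exact absurd h1 hi
      · exact ⟨hc, h1, h2⟩

lemma count_pairs {n p : ℕ} (S : Finset (Fin (n + 1))) (hS : S.card = p) :
    (univ.filter (fun pr : Fin (n + 1) × Fin (n + 1) => pr.1 < pr.2 ∧
      ((pr.1 ∈ S ∧ pr.2 ∉ S) ∨ (pr.2 ∈ S ∧ pr.1 ∉ S)))).card = p * (n + 1 - p) := by
  have h1 : (S ×ˢ Sᶜ).card = p * (n + 1 - p) := by
    rw [Finset.card_product, hS, Finset.card_compl, hS, Fintype.card_fin]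
  rw [← h1]
  apply Finset.card_nbij' (fun pr => if pr.1 ∈ S then pr else (pr.2, pr.1))
    (fun pr => if pr.1 < pr.2 then pr else (pr.2, pr.1))
  · intro pr hpr
    simp only [mem_coe, mem_filter, mem_univ, true_and] at hpr
    obtain ⟨hlt, hxor⟩ := hpr
    rcases hxor with ⟨h1', h2'⟩ | ⟨h1', h2'⟩
    · dsimp only; rw [if_pos h1']
      simp only [mem_coe, Finset.mem_product, Finset.mem_compl]
      exact ⟨h1', h2'⟩
    · dsimp only; rw [if_neg h2']
      simp only [mem_coe, Finset.mem_product, Finset.mem_compl]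
      exact ⟨h1', h2'⟩
  · intro pr hpr
    simp only [mem_coe, Finset.mem_product, Finset.mem_compl] at hpr
    obtain ⟨h1', h2'⟩ := hpr
    have hne : pr.1 ≠ pr.2 := by rintro h; rw [h] at h1'; exact h2' h1'
    rcases lt_or_gt_of_ne hne with hlt | hgt
    · dsimp only; rw [if_pos hlt]
      simp only [mem_coe, mem_filter, mem_univ, true_and]
      exact ⟨hlt, Or.inl ⟨h1', h2'⟩⟩
    · dsimp only; rw [if_neg (not_lt.mpr (le_of_lt hgt))]
      simp only [mem_coe, mem_filter, mem_univ, true_and]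
      exact ⟨hgt, Or.inr ⟨h1', h2'⟩⟩
  · intro pr hpr
    simp only [mem_coe, mem_filter, mem_univ, true_and] at hpr
    obtain ⟨hlt, hxor⟩ := hpr
    rcases hxor with ⟨h1', h2'⟩ | ⟨h1', h2'⟩
    · dsimp only; rw [if_pos h1', if_pos hlt]
    · dsimp only; rw [if_neg h2']
      rw [if_neg (not_lt.mpr (le_of_lt hlt))]
  · intro pr hpr
    simp only [mem_coe, Finset.mem_product, Finset.mem_compl] at hpr
    obtain ⟨h1', h2'⟩ := hpr
    by_cases hlt : pr.1 < pr.2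
    · dsimp only; rw [if_pos hlt, if_pos h1']
    · dsimp only; rw [if_neg hlt, if_neg (by simpa using h2')]

theorem delta_chi (br : (Fin 2 → K) →ₗ[K] (Fin 2 → K) →ₗ[K] (Fin 2 → K))
    (hab : br ![1, 0] ![0, 1] = ![1, 0]) (hba : br ![0, 1] ![1, 0] = ![1, 0])
    (haa : br ![1, 0] ![1, 0] = 0) (hbb : br ![0, 1] ![0, 1] = 0)
    (p q : ℕ) :
    cdiff br (0 : (Fin 2 → K) →ₗ[K] K →ₗ[K] K) (p + q) (chi2 K p q (p + q))
      = (p * (q + 1)) • chi2 K p (q + 1) (p + q + 1) := by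
  funext x
  unfold cdiff
  rw [show (∑ i : Fin (p + q + 1), (0 : (Fin 2 → K) →ₗ[K] K →ₗ[K] K) (x i)
      (chi2 K p q (p + q) (x ∘ i.succAbove))) = 0 from
    Finset.sum_eq_zero (fun i _ => by simp), add_zero]
  have hterm : ∀ pr ∈ univ.filter (fun pr : Fin (p + q + 1) × Fin (p + q + 1) => pr.1 < pr.2),
      chi2 K p q (p + q) (Function.update x pr.1 (br (x pr.1) (x pr.2)) ∘ pr.2.succAbove)
      = ∑ S ∈ univ.filter (fun S : Finset (Fin (p + q + 1)) =>
          S.card = p ∧ ((pr.1 ∈ S ∧ pr.2 ∉ S) ∨ (pr.2 ∈ S ∧ pr.1 ∉ S))), mono S x := by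
    intro pr hpr
    simp only [mem_filter, mem_univ, true_and] at hpr
    rw [br_eq br hab hba haa hbb]
    exact key rfl x pr.1 pr.2 (ne_of_lt hpr)
  rw [Finset.sum_congr rfl hterm]
  -- exchange the two sums
  rw [Finset.sum_filter]
  have hpush : ∀ pr : Fin (p + q + 1) × Fin (p + q + 1),
      (if pr.1 < pr.2 then
        (∑ S ∈ univ.filter (fun S : Finset (Fin (p + q + 1)) =>
          S.card = p ∧ ((pr.1 ∈ S ∧ pr.2 ∉ S) ∨ (pr.2 ∈ S ∧ pr.1 ∉ S))), mono S x) else 0)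
      = ∑ S : Finset (Fin (p + q + 1)),
          (if pr.1 < pr.2 ∧ (S.card = p ∧ ((pr.1 ∈ S ∧ pr.2 ∉ S) ∨ (pr.2 ∈ S ∧ pr.1 ∉ S)))
            then mono S x else 0) := by
    intro pr
    by_cases h : pr.1 < pr.2
    · rw [if_pos h, Finset.sum_filter]
      apply Finset.sum_congr rfl
      intro S _
      by_cases h2 : S.card = p ∧ ((pr.1 ∈ S ∧ pr.2 ∉ S) ∨ (pr.2 ∈ S ∧ pr.1 ∉ S))
      · rw [if_pos h2, if_pos ⟨h, h2⟩]
      · rw [if_neg h2, if_neg (by rintro ⟨_, hc⟩; exact h2 hc)]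
    · rw [if_neg h]
      symm
      apply Finset.sum_eq_zero
      intro S _
      rw [if_neg (by rintro ⟨hc, _⟩; exact h hc)]
  rw [Finset.sum_congr rfl (fun pr _ => hpush pr), Finset.sum_comm]
  have hinner : ∀ S : Finset (Fin (p + q + 1)),
      (∑ pr : Fin (p + q + 1) × Fin (p + q + 1),
        (if pr.1 < pr.2 ∧ (S.card = p ∧ ((pr.1 ∈ S ∧ pr.2 ∉ S) ∨ (pr.2 ∈ S ∧ pr.1 ∉ S)))
          then mono S x else 0))
      = (if S.card = p then (p * (q + 1)) else 0) • mono S x := by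
    intro S
    rw [← Finset.sum_filter]
    rw [Finset.sum_const]
    by_cases hS : S.card = p
    · rw [if_pos hS]
      congr 1
      have : (univ.filter (fun pr : Fin (p + q + 1) × Fin (p + q + 1) =>
          pr.1 < pr.2 ∧ (S.card = p ∧ ((pr.1 ∈ S ∧ pr.2 ∉ S) ∨ (pr.2 ∈ S ∧ pr.1 ∉ S)))))
          = univ.filter (fun pr : Fin (p + q + 1) × Fin (p + q + 1) =>
          pr.1 < pr.2 ∧ ((pr.1 ∈ S ∧ pr.2 ∉ S) ∨ (pr.2 ∈ S ∧ pr.1 ∉ S))) := by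
        apply Finset.filter_congr
        intro pr _
        constructor
        · rintro ⟨h1, _, h3⟩; exact ⟨h1, h3⟩
        · rintro ⟨h1, h3⟩; exact ⟨h1, hS, h3⟩
      rw [this, count_pairs S hS]
      congr 1
      omega
    · rw [if_neg hS, zero_smul]
      rw [show (univ.filter (fun pr : Fin (p + q + 1) × Fin (p + q + 1) =>
          pr.1 < pr.2 ∧ (S.card = p ∧ ((pr.1 ∈ S ∧ pr.2 ∉ S) ∨ (pr.2 ∈ S ∧ pr.1 ∉ S)))))
          = ∅ from Finset.filter_eq_empty_iff.mpr
        (fun _ _ => by rintro ⟨_, hc, _⟩; exact hS hc)]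
      simp
  rw [Finset.sum_congr rfl (fun S _ => hinner S)]
  rw [Pi.smul_apply, chi2_apply_of p (q + 1) (p + q + 1) (by omega), Finset.smul_sum]
  simp only [ite_smul, zero_smul]
  rw [← Finset.sum_filter]

end TDC

namespace TDC
open Finset
variable {K : Type*} [Field K]

lemma even_nsmul_eq_zero [CharP K 2] {V : Type*} [AddCommGroup V] [Module K V]
    {m : ℕ} (hm : Even m) (v : V) : m • v = 0 := by
  rw [← Nat.cast_smul_eq_nsmul K, (CharP.cast_eq_zero_iff K 2 m).mpr
    (even_iff_two_dvd.mp hm), zero_smul]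

lemma odd_nsmul_eq [CharP K 2] {V : Type*} [AddCommGroup V] [Module K V]
    {m : ℕ} (hm : Odd m) (v : V) : m • v = v := by
  rw [← Nat.cast_smul_eq_nsmul K]
  obtain ⟨t, rfl⟩ := hm
  have h2 : ((2 : ℕ) : K) = 0 := by
    exact_mod_cast CharP.cast_eq_zero K 2
  push_cast
  rw [show ((2 : K) * t + 1) = ((2:ℕ):K) * t + 1 by push_cast; ring, h2]
  rw [zero_mul, zero_add, one_smul]

lemma chi2_mem_Sc (p q n : ℕ) : chi2 K p q n ∈ Sc K (Fin 2 → K) K n :=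
  ⟨chi2_multilin p q n, chi2_sym p q n⟩

lemma evalAt_linear {X : Type*} (pt : X) : ∃ e : (X → K) →ₗ[K] K, ∀ f, e f = f pt :=
  ⟨{ toFun := fun f => f pt, map_add' := fun _ _ => rfl, map_smul' := fun _ _ => rfl },
    fun _ => rfl⟩

def evalAt {X : Type*} (pt : X) : (X → K) →ₗ[K] K where
  toFun := fun f => f pt
  map_add' := fun _ _ => rfl
  map_smul' := fun _ _ => rfl

lemma expansion (n : ℕ) (f : (Fin n → Fin 2 → K) → K)
    (hf : f ∈ Sc K (Fin 2 → K) K n) :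
    f = ∑ p ∈ Finset.range (n + 1), f (T K n p) • chi2 K p (n - p) n := by
  have hg : f - (∑ p ∈ Finset.range (n + 1), f (T K n p) • chi2 K p (n - p) n)
      ∈ Sc K (Fin 2 → K) K n :=
    Submodule.sub_mem _ hf (Submodule.sum_mem _ (fun p _ =>
      Submodule.smul_mem _ _ (chi2_mem_Sc p (n - p) n)))
  obtain ⟨⟨hadd, hsmul⟩, hsym⟩ := hg
  have hT : ∀ p' ≤ n,
      (f - (∑ p ∈ Finset.range (n + 1), f (T K n p) • chi2 K p (n - p) n)) (T K n p') = 0 := by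
    intro p' hp'
    rw [Pi.sub_apply, Finset.sum_apply]
    rw [show (∑ p ∈ Finset.range (n + 1), (f (T K n p) • chi2 K p (n - p) n) (T K n p'))
        = ∑ p ∈ Finset.range (n + 1), (if p = p' then f (T K n p) else 0) from
      Finset.sum_congr rfl (fun p hp => by
        rw [Pi.smul_apply, smul_eq_mul,
          chi2_T p (n - p) n p' (by rw [mem_range] at hp; omega) hp']
        split <;> simp)]
    rw [Finset.sum_ite_eq' (Finset.range (n + 1)) p' (fun p => f (T K n p)),
      if_pos (by rw [mem_range]; omega)]
    rw [sub_self]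
  have h0 := sub_eq_zero.mp (vanish _ hadd hsmul hsym hT)
  exact h0

variable [CharP K 2]
variable (br : (Fin 2 → K) →ₗ[K] (Fin 2 → K) →ₗ[K] (Fin 2 → K))
variable (hab : br ![1, 0] ![0, 1] = ![1, 0]) (hba : br ![0, 1] ![1, 0] = ![1, 0])
variable (haa : br ![1, 0] ![1, 0] = 0) (hbb : br ![0, 1] ![0, 1] = 0)

include hab hba haa hbb

lemma hmem_chi (n k : ℕ) (hk : 2 * k ≤ n) :
    chi2 K (2 * k) (n - 2 * k) n ∈ Zc K (Fin 2 → K) K br 0 n := by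
  obtain ⟨q, rfl⟩ : ∃ q, 2 * k + q = n := ⟨n - 2 * k, by omega⟩
  rw [show 2 * k + q - 2 * k = q by omega]
  refine ⟨chi2_multilin _ _ _, chi2_sym _ _ _, ?_⟩
  rw [delta_chi br hab hba haa hbb (2 * k) q]
  exact even_nsmul_eq_zero (K := K) (m := 2 * k * (q + 1)) ⟨k * (q + 1), by ring⟩
    (chi2 K (2 * k) (q + 1) (2 * k + q + 1))

lemma cocycle_eval_zero (n : ℕ) (z : (Fin n → Fin 2 → K) → K)
    (hz : z ∈ Zc K (Fin 2 → K) K br 0 n) (p : ℕ) (hp : p ≤ n)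
    (hodd : Odd p) (heven : Even (n - p)) : z (T K n p) = 0 := by
  obtain ⟨hml, hsym, hcd⟩ := hz
  have he := cdiff_T br hab haa hbb z hml.2 p hp
  rw [hcd] at he
  have hodd2 : Odd (p * (n + 1 - p)) := by
    refine hodd.mul ?_
    obtain ⟨t, ht⟩ := heven
    exact ⟨t, by omega⟩
  rw [odd_nsmul_eq (K := K) hodd2] at he
  have : (0 : (Fin (n+1) → Fin 2 → K) → K) (T K (n+1) p) = 0 := rfl
  rw [← he, this]

lemma chi_mem_Bc (n p : ℕ) (hp : p ≤ n) (hpodd : Odd p) (hqodd : Odd (n - p)) :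
    chi2 K p (n - p) n ∈ Bc K (Fin 2 → K) K br 0 n := by
  cases n with
  | zero =>
    obtain ⟨t, ht⟩ := hpodd
    omega
  | succ m =>
    obtain ⟨t, ht⟩ := hqodd
    obtain ⟨q, rfl⟩ : ∃ q, p + q = m := ⟨m - p, by omega⟩
    rw [show p + q + 1 - p = q + 1 by omega]
    apply Submodule.subset_span
    refine ⟨chi2 K p q (p + q), chi2_multilin _ _ _, chi2_sym _ _ _, ?_⟩
    rw [delta_chi br hab hba haa hbb p q]
    have hco : Odd (p * (q + 1)) := by
      refine hpodd.mul ?_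
      exact ⟨t, by omega⟩
    rw [odd_nsmul_eq (K := K) (m := p * (q + 1)) hco (chi2 K p (q + 1) (p + q + 1))]

lemma Bc_eval_zero (n : ℕ) (g : (Fin n → Fin 2 → K) → K)
    (hg : g ∈ Bc K (Fin 2 → K) K br 0 n) (k : ℕ) (hk : 2 * k ≤ n) :
    g (T K n (2 * k)) = 0 := by
  cases n with
  | zero =>
    rw [show Bc K (Fin 2 → K) K br 0 0 = ⊥ from rfl, Submodule.mem_bot] at hg
    rw [hg]
    rfl
  | succ m =>
    have hle : Bc K (Fin 2 → K) K br 0 (m + 1) ≤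
        LinearMap.ker (evalAt (K := K) (T K (m + 1) (2 * k))) := by
      rw [show Bc K (Fin 2 → K) K br 0 (m + 1) = Submodule.span K
        {g | ∃ f : (Fin m → Fin 2 → K) → K, IsMultilin K m f ∧ IsSym m f
          ∧ g = cdiff br 0 m f} from rfl]
      rw [Submodule.span_le]
      rintro g' ⟨f, hml, _, rfl⟩
      rw [SetLike.mem_coe, LinearMap.mem_ker]
      show cdiff br 0 m f (T K (m + 1) (2 * k)) = 0
      rcases Nat.lt_or_ge (2 * k) (m + 1) with h | h
      · rw [cdiff_T br hab haa hbb f hml.2 (2 * k) (by omega)]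
        exact even_nsmul_eq_zero (K := K) (m := 2 * k * (m + 1 - 2 * k)) ⟨k * (m + 1 - 2 * k), by ring⟩
          (f (T K m (2 * k)))
      · have h2 : 2 * k = m + 1 := by omega
        rw [h2]
        exact cdiff_T_top br haa f hml.2
    exact hle hg

end TDC

open TDC in
theorem two_dimensional_cohomology {K : Type*} [Field K] [CharP K 2]
    (br : (Fin 2 → K) →ₗ[K] (Fin 2 → K) →ₗ[K] (Fin 2 → K))
    (hab : br ![1, 0] ![0, 1] = ![1, 0]) (hba : br ![0, 1] ![1, 0] = ![1, 0])
    (haa : br ![1, 0] ![1, 0] = 0) (hbb : br ![0, 1] ![0, 1] = 0) :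
    -- `δχ_{pq} = p(q+1)·χ_{p,q+1}`:
    (∀ p q : ℕ, cdiff br (0 : (Fin 2 → K) →ₗ[K] K →ₗ[K] K) (p + q) (chi2 K p q (p + q))
      = (p * (q + 1)) • chi2 K p (q + 1) (p + q + 1)) ∧
    -- the classes of the `χ_{pq}`, `p + q = n`, `p = 2k` even, form a basis of `H^n`:
    (∀ n : ℕ, ∃ hmem : ∀ k : Fin (n / 2 + 1),
        chi2 K (2 * (k : ℕ)) (n - 2 * (k : ℕ)) n ∈ Zc K (Fin 2 → K) K br 0 n,
      LinearIndependent K (fun k : Fin (n / 2 + 1) =>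
        (Submodule.Quotient.mk ⟨chi2 K (2 * (k : ℕ)) (n - 2 * (k : ℕ)) n, hmem k⟩ :
          Hcomm K (Fin 2 → K) K br 0 n)) ∧
      Submodule.span K (Set.range (fun k : Fin (n / 2 + 1) =>
        (Submodule.Quotient.mk ⟨chi2 K (2 * (k : ℕ)) (n - 2 * (k : ℕ)) n, hmem k⟩ :
          Hcomm K (Fin 2 → K) K br 0 n))) = ⊤) ∧
    -- in particular `dim H^n_comm(L,K) = ⌊n/2⌋ + 1`:
    (∀ n : ℕ, Module.finrank K (Hcomm K (Fin 2 → K) K br 0 n) = n / 2 + 1) := by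
  have part1 := TDC.delta_chi br hab hba haa hbb
  have main : ∀ n : ℕ, ∃ hmem : ∀ k : Fin (n / 2 + 1),
      chi2 K (2 * (k : ℕ)) (n - 2 * (k : ℕ)) n ∈ Zc K (Fin 2 → K) K br 0 n,
      LinearIndependent K (fun k : Fin (n / 2 + 1) =>
        (Submodule.Quotient.mk ⟨chi2 K (2 * (k : ℕ)) (n - 2 * (k : ℕ)) n, hmem k⟩ :
          Hcomm K (Fin 2 → K) K br 0 n)) ∧
      Submodule.span K (Set.range (fun k : Fin (n / 2 + 1) =>
        (Submodule.Quotient.mk ⟨chi2 K (2 * (k : ℕ)) (n - 2 * (k : ℕ)) n, hmem k⟩ :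
          Hcomm K (Fin 2 → K) K br 0 n))) = ⊤ := by
    intro n
    have hmem : ∀ k : Fin (n / 2 + 1),
        chi2 K (2 * (k : ℕ)) (n - 2 * (k : ℕ)) n ∈ Zc K (Fin 2 → K) K br 0 n := fun k =>
      TDC.hmem_chi br hab hba haa hbb n k (by have := k.isLt; omega)
    refine ⟨hmem, ?_, ?_⟩
    · -- linear independence via the dual evaluation functionals
      set Z := Zc K (Fin 2 → K) K br 0 n with hZ
      let ψ : Z →ₗ[K] (Fin (n / 2 + 1) → K) :=
        LinearMap.pi (fun k => (TDC.evalAt (T K n (2 * (k : ℕ)))).comp Z.subtype)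
      have hker : (Bc K (Fin 2 → K) K br 0 n).comap Z.subtype ≤ LinearMap.ker ψ := by
        intro z hz
        rw [LinearMap.mem_ker]
        funext k
        show (z : (Fin n → Fin 2 → K) → K) (T K n (2 * (k : ℕ))) = 0
        exact TDC.Bc_eval_zero br hab hba haa hbb n z.val (Submodule.mem_comap.mp hz) k
          (by have := k.isLt; omega)
      let Ψ := Submodule.liftQ _ ψ hker
      have hΨ : ∀ k : Fin (n / 2 + 1),
          Ψ (Submodule.Quotient.mk ⟨chi2 K (2 * (k : ℕ)) (n - 2 * (k : ℕ)) n, hmem k⟩) =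
            fun j : Fin (n / 2 + 1) => if (2 * (k : ℕ)) = 2 * (j : ℕ) then (1 : K) else 0 := by
        intro k
        funext j
        rw [show Ψ (Submodule.Quotient.mk ⟨chi2 K (2 * (k : ℕ)) (n - 2 * (k : ℕ)) n, hmem k⟩)
            = ψ ⟨chi2 K (2 * (k : ℕ)) (n - 2 * (k : ℕ)) n, hmem k⟩ from
          Submodule.liftQ_apply _ ψ _]
        show chi2 K (2 * (k : ℕ)) (n - 2 * (k : ℕ)) n (T K n (2 * (j : ℕ))) = _
        rw [TDC.chi2_T (2 * (k : ℕ)) (n - 2 * (k : ℕ)) n (2 * (j : ℕ))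
          (by have := k.isLt; omega) (by have := j.isLt; omega)]
      rw [Fintype.linearIndependent_iff]
      intro g hg j
      have h1 : Ψ (∑ k, g k • (Submodule.Quotient.mk
          ⟨chi2 K (2 * (k : ℕ)) (n - 2 * (k : ℕ)) n, hmem k⟩ :
          Hcomm K (Fin 2 → K) K br 0 n)) = 0 := by rw [hg, map_zero]
      rw [map_sum] at h1
      simp only [map_smul] at h1
      have h2 := congrFun h1 j
      rw [Finset.sum_apply] at h2
      simp only [Pi.smul_apply, hΨ, smul_eq_mul, Pi.zero_apply] at h2
      rw [Finset.sum_congr rfl (fun k _ =>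
        show g k * (if (2 * (k : ℕ)) = 2 * (j : ℕ) then (1:K) else 0)
          = if k = j then g k else 0 from by
        by_cases h : k = j
        · subst h; simp
        · rw [if_neg h, if_neg (fun hc => h (Fin.ext (by omega))), mul_zero])] at h2
      rw [Finset.sum_ite_eq' Finset.univ j g, if_pos (Finset.mem_univ j)] at h2
      exact h2
    · -- spanning
      rw [eq_top_iff]
      rintro c -
      obtain ⟨z, rfl⟩ := Submodule.Quotient.mk_surjective _ c
      obtain ⟨hml, hsym, hcd⟩ := z.2
      obtain ⟨c2, hc2, hexp⟩ : ∃ c2 : ℕ → K, (∀ p, c2 p = z.val (T K n p)) ∧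
          (z : (Fin n → Fin 2 → K) → K)
            = ∑ p ∈ Finset.range (n + 1), c2 p • chi2 K p (n - p) n :=
        ⟨fun p => z.val (T K n p), fun _ => rfl, TDC.expansion n z.val ⟨hml, hsym⟩⟩
      set w : Zc K (Fin 2 → K) K br 0 n := ∑ k : Fin (n / 2 + 1),
        c2 (2 * (k : ℕ)) •
          (⟨chi2 K (2 * (k : ℕ)) (n - 2 * (k : ℕ)) n, hmem k⟩ : Zc K (Fin 2 → K) K br 0 n)
        with hwdef
      have hwval : (w : (Fin n → Fin 2 → K) → K) = ∑ k : Fin (n / 2 + 1),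
          c2 (2 * (k : ℕ)) • chi2 K (2 * (k : ℕ)) (n - 2 * (k : ℕ)) n := by
        rw [hwdef]
        push_cast
        rfl
      have heven : (∑ k : Fin (n / 2 + 1),
            c2 (2 * (k : ℕ)) • chi2 K (2 * (k : ℕ)) (n - 2 * (k : ℕ)) n)
          = ∑ p ∈ (Finset.range (n + 1)).filter (fun p => Even p),
              c2 p • chi2 K p (n - p) n := by
        apply Finset.sum_nbij' (fun k : Fin (n / 2 + 1) => 2 * (k : ℕ))
          (fun p => (⟨p / 2 % (n / 2 + 1), Nat.mod_lt _ (by omega)⟩ : Fin (n / 2 + 1)))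
        · intro k _
          rw [Finset.mem_filter, Finset.mem_range]
          exact ⟨by have := k.isLt; omega, ⟨(k : ℕ), by ring⟩⟩
        · intro p _
          exact Finset.mem_univ _
        · intro k _
          apply Fin.ext
          show 2 * (k : ℕ) / 2 % (n / 2 + 1) = (k : ℕ)
          rw [Nat.mul_div_cancel_left _ (by norm_num : 0 < 2)]
          exact Nat.mod_eq_of_lt k.isLt
        · intro p hp
          rw [Finset.mem_filter, Finset.mem_range] at hp
          obtain ⟨hpn, t, ht⟩ := hp
          show 2 * (p / 2 % (n / 2 + 1)) = p
          have hlt : p / 2 < n / 2 + 1 := by omega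
          rw [Nat.mod_eq_of_lt hlt]
          omega
        · intro k _
          rfl
      have hBc : z.val - (w : (Fin n → Fin 2 → K) → K) ∈ Bc K (Fin 2 → K) K br 0 n := by
        have hzw : z.val - (w : (Fin n → Fin 2 → K) → K)
            = ∑ p ∈ (Finset.range (n + 1)).filter (fun p => ¬ Even p),
                c2 p • chi2 K p (n - p) n := by
          rw [hwval, heven, sub_eq_iff_eq_add, hexp]
          exact (Finset.sum_filter_add_sum_filter_not (Finset.range (n + 1)) (fun p => Even p)
            (fun p => c2 p • chi2 K p (n - p) n)).symm.trans (add_comm _ _)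
        rw [hzw]
        apply Submodule.sum_mem
        intro p hp
        rw [Finset.mem_filter, Finset.mem_range] at hp
        obtain ⟨hpn, hodd⟩ := hp
        rcases Nat.even_or_odd (n - p) with he | ho
        · rw [hc2 p, show z.val (T K n p) = 0 from
            TDC.cocycle_eval_zero br hab hba haa hbb n z.val z.2 p (by omega)
              (Nat.not_even_iff_odd.mp hodd) he, zero_smul]
          exact Submodule.zero_mem _
        · exact Submodule.smul_mem _ _
            (TDC.chi_mem_Bc br hab hba haa hbb n p (by omega)
              (Nat.not_even_iff_odd.mp hodd) ho)
      have hquot : (Submodule.Quotient.mk z : Hcomm K (Fin 2 → K) K br 0 n)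
          = Submodule.Quotient.mk w := by
        rw [Submodule.Quotient.eq]
        show (Zc K (Fin 2 → K) K br 0 n).subtype (z - w) ∈ Bc K (Fin 2 → K) K br 0 n
        rw [map_sub]
        exact hBc
      rw [hquot, hwdef]
      rw [show (Submodule.Quotient.mk (∑ k : Fin (n / 2 + 1),
          c2 (2 * (k : ℕ)) •
            (⟨chi2 K (2 * (k : ℕ)) (n - 2 * (k : ℕ)) n, hmem k⟩ : Zc K (Fin 2 → K) K br 0 n)) :
          Hcomm K (Fin 2 → K) K br 0 n)
          = ∑ k : Fin (n / 2 + 1), c2 (2 * (k : ℕ)) •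
            (Submodule.Quotient.mk ⟨chi2 K (2 * (k : ℕ)) (n - 2 * (k : ℕ)) n, hmem k⟩ :
              Hcomm K (Fin 2 → K) K br 0 n) from by
        rw [show ∀ u : Zc K (Fin 2 → K) K br 0 n, (Submodule.Quotient.mk u :
            Hcomm K (Fin 2 → K) K br 0 n)
            = Submodule.mkQ _ u from fun _ => rfl, map_sum]
        simp only [map_smul]
        rfl]
      exact Submodule.sum_mem _ (fun k _ => Submodule.smul_mem _ _
        (Submodule.subset_span ⟨k, rfl⟩))
  refine ⟨part1, main, ?_⟩
  intro n
  obtain ⟨hmem, hind, hspan⟩ := main n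
  have B : Module.Basis (Fin (n / 2 + 1)) K (Hcomm K (Fin 2 → K) K br 0 n) :=
    Module.Basis.mk hind (by rw [hspan])
  rw [Module.finrank_eq_card_basis B, Fintype.card_fin]
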